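/- Let g(x,y) = (y / Γ(1+y)^{1/y}) · (Γ(1+xy)^{1/y} / (y^x · Γ(1+x))) for x ≥ 1/2 and y ≥ 2. Then for every fixed x with 1/2 ≤ x ≤ 1, the function y ↦ g(x,y) is non-decreasing on [2, ∞); that is, for all 1/2 ≤ x ≤ 1 and 2 ≤ y₁ ≤ y₂, g(x,y₁) ≤ g(x,y₂). -/

import Mathlib

open Real Filter Finset Topology
open scoped Nat

/-- Elementary log inequality: for `0 < a ≤ b`,
`1/(a+1) - 1/(b+1) ≤ (log(a+1) - log a) - (log(b+1) - log b)`. -/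
lemma aux_key_ineq {a b : ℝ} (ha : 0 < a) (hab : a ≤ b) :
    1/(a+1) - 1/(b+1) ≤ (Real.log (a+1) - Real.log a) - (Real.log (b+1) - Real.log b) := by
  have hb : 0 < b := lt_of_lt_of_le ha hab
  have h1 : Real.log (a+1) - Real.log a - (Real.log (b+1) - Real.log b)
      = Real.log ((a+1)*b) - Real.log (a*(b+1)) := by
    rw [Real.log_mul (by positivity) (by positivity),
      Real.log_mul (by positivity) (by positivity)]
    ring
  have h2 : Real.log (a*(b+1)) - Real.log ((a+1)*b) ≤ a*(b+1)/((a+1)*b) - 1 := by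
    rw [← Real.log_div (by positivity) (by positivity)]
    exact Real.log_le_sub_one_of_pos (by positivity)
  have h3 : 1/(a+1) - 1/(b+1) ≤ 1 - a*(b+1)/((a+1)*b) := by
    have e1 : 1/(a+1) - 1/(b+1) = (b-a)/((a+1)*(b+1)) := by
      field_simp
      ring
    have e2 : 1 - a*(b+1)/((a+1)*b) = (b-a)/((a+1)*b) := by
      field_simp
      ring
    rw [e1, e2]
    gcongr
    · linarith
  linarith

/-- Telescoped sum inequality: `∑_{k=1}^m (1/(c+k) - 1/(d+k)) ≤ log d - log c`. -/
lemma aux_sum_ineq {c d : ℝ} (hc : 0 < c) (hcd : c ≤ d) (m : ℕ) :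
    ∑ k ∈ Finset.range m, (1/(c+(k+1)) - 1/(d+(k+1))) ≤ Real.log d - Real.log c := by
  have hd : 0 < d := lt_of_lt_of_le hc hcd
  set Ψ : ℕ → ℝ := fun k => Real.log (d + k) - Real.log (c + k) with hΨ
  have step : ∀ k ∈ Finset.range m, 1/(c+(k+1)) - 1/(d+(k+1)) ≤ Ψ k - Ψ (k+1) := by
    intro k _
    have h := aux_key_ineq (a := c + k) (b := d + k)
      (by positivity) (by linarith)
    have e1 : c + ((k:ℝ)+1) = (c + k) + 1 := by ring
    have e2 : d + ((k:ℝ)+1) = (d + k) + 1 := by ring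
    simp only [hΨ]
    push_cast
    rw [e1, e2]
    linarith
  calc ∑ k ∈ Finset.range m, (1/(c+(k+1)) - 1/(d+(k+1)))
      ≤ ∑ k ∈ Finset.range m, (Ψ k - Ψ (k+1)) := Finset.sum_le_sum step
    _ = Ψ 0 - Ψ m := Finset.sum_range_sub' Ψ m
    _ ≤ Ψ 0 := by
        have h0 : Real.log (c+m) ≤ Real.log (d+m) :=
          Real.log_le_log (by positivity) (by linarith)
        have : 0 ≤ Ψ m := by simp only [hΨ]; linarith
        linarith
    _ = Real.log d - Real.log c := by simp [hΨ]

/-- Integral representation: `∫_x^1 dt/(ty+(k+1)) = (log(y+k+1) - log(xy+k+1))/y`. -/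
lemma aux_integral_rep {x y : ℝ} (hx0 : 0 < x) (hx1 : x ≤ 1) (hy : 0 < y) (k : ℕ) :
    ∫ t in x..1, 1/(t*y + (k+1)) = (Real.log (y + (k+1)) - Real.log (x*y + (k+1)))/y := by
  have hpos : ∀ t ∈ Set.uIcc x 1, 0 < t*y + (k+1) := by
    intro t ht
    rw [Set.uIcc_of_le hx1] at ht
    have h0 : 0 < t := lt_of_lt_of_le hx0 ht.1
    positivity
  have hderiv : ∀ t ∈ Set.uIcc x 1,
      HasDerivAt (fun u => Real.log (u*y + (k+1)) / y) (1/(t*y+(k+1))) t := by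
    intro t ht
    have h1 : HasDerivAt (fun u : ℝ => u*y + ((k:ℝ)+1)) y t := by
      simpa using ((hasDerivAt_id t).mul_const y).add_const ((k:ℝ)+1)
    have h2 := (Real.hasDerivAt_log (ne_of_gt (hpos t ht))).comp t h1
    have h3 := h2.div_const y
    have hy' : y ≠ 0 := ne_of_gt hy
    have hA' : t*y + ((k:ℝ)+1) ≠ 0 := ne_of_gt (hpos t ht)
    rw [show (1:ℝ)/(t*y+((k:ℝ)+1)) = (t*y+((k:ℝ)+1))⁻¹ * y / y by
      rw [mul_div_assoc, div_self hy', mul_one, one_div]]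
    exact h3
  have hint : IntervalIntegrable (fun t => 1/(t*y+(k+1))) MeasureTheory.volume x 1 := by
    apply ContinuousOn.intervalIntegrable
    exact ContinuousOn.div continuousOn_const
      (((continuousOn_id).mul continuousOn_const).add continuousOn_const)
      (fun t ht => ne_of_gt (hpos t ht))
  rw [intervalIntegral.integral_eq_sub_of_hasDerivAt hderiv hint]
  rw [one_mul, ← sub_div]

/-- The finite-sum inequality at the heart of the monotonicity proof. -/
lemma aux_finite_sum_ineq {x y₁ y₂ : ℝ} (hx1 : 1/2 ≤ x) (hx2 : x ≤ 1)
    (h₁ : 2 ≤ y₁) (h₁₂ : y₁ ≤ y₂) (m : ℕ) :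
    ∑ k ∈ Finset.range m,
      ((Real.log (y₁+(k+1)) - Real.log (x*y₁+(k+1)))/y₁
        - (Real.log (y₂+(k+1)) - Real.log (x*y₂+(k+1)))/y₂)
      ≤ (1-x) * (Real.log y₂ - Real.log y₁) := by
  have hx0 : 0 < x := by linarith
  have hy₁ : 0 < y₁ := by linarith
  have hy₂ : 0 < y₂ := by linarith
  have hposd : ∀ (y : ℝ), 0 < y → ∀ (k : ℕ), ∀ t ∈ Set.uIcc x 1, 0 < t*y + ((k:ℝ)+1) := by
    intro y hy k t ht
    rw [Set.uIcc_of_le hx2] at ht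
    have h0 : 0 < t := lt_of_lt_of_le hx0 ht.1
    positivity
  have hint : ∀ (y : ℝ) (hy : 0 < y) (k : ℕ),
      IntervalIntegrable (fun t => 1/(t*y+((k:ℝ)+1))) MeasureTheory.volume x 1 := by
    intro y hy k
    apply ContinuousOn.intervalIntegrable
    exact ContinuousOn.div continuousOn_const
      (((continuousOn_id).mul continuousOn_const).add continuousOn_const)
      (fun t ht => ne_of_gt (hposd y hy k t ht))
  have e : ∀ k ∈ Finset.range m,
      (Real.log (y₁+(k+1)) - Real.log (x*y₁+(k+1)))/y₁
        - (Real.log (y₂+(k+1)) - Real.log (x*y₂+(k+1)))/y₂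
      = ∫ t in x..1, (1/(t*y₁+(k+1)) - 1/(t*y₂+(k+1))) := by
    intro k _
    rw [intervalIntegral.integral_sub (hint y₁ hy₁ k) (hint y₂ hy₂ k),
      aux_integral_rep hx0 hx2 hy₁ k, aux_integral_rep hx0 hx2 hy₂ k]
  rw [Finset.sum_congr rfl e, ← intervalIntegral.integral_finset_sum
    (fun k (_ : k ∈ Finset.range m) => (hint y₁ hy₁ k).sub (hint y₂ hy₂ k))]
  have hconst : ∫ t in x..1, (Real.log y₂ - Real.log y₁)
      = (1-x) * (Real.log y₂ - Real.log y₁) := by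
    rw [intervalIntegral.integral_const, smul_eq_mul]
  rw [← hconst]
  apply intervalIntegral.integral_mono_on hx2
    (by
      have h := IntervalIntegrable.sum (μ := MeasureTheory.volume) (a := x) (b := 1)
        (Finset.range m)
        (f := fun k => fun t => 1/(t*y₁+((k:ℝ)+1)) - 1/(t*y₂+((k:ℝ)+1)))
        (fun k _ => (hint y₁ hy₁ k).sub (hint y₂ hy₂ k))
      have h2 : (∑ k ∈ Finset.range m, fun t : ℝ => 1/(t*y₁+((k:ℝ)+1)) - 1/(t*y₂+((k:ℝ)+1)))
          = fun t : ℝ => ∑ k ∈ Finset.range m, (1/(t*y₁+((k:ℝ)+1)) - 1/(t*y₂+((k:ℝ)+1))) := by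
        funext t
        simp [Finset.sum_apply]
      rw [h2] at h
      exact h)
    intervalIntegrable_const
  intro t ht
  have h0 : 0 < t := lt_of_lt_of_le hx0 ht.1
  have hs := aux_sum_ineq (c := t*y₁) (d := t*y₂) (by positivity)
    (by nlinarith) m
  have hl : Real.log (t*y₂) - Real.log (t*y₁) = Real.log y₂ - Real.log y₁ := by
    rw [Real.log_mul (ne_of_gt h0) (ne_of_gt hy₂),
      Real.log_mul (ne_of_gt h0) (ne_of_gt hy₁)]
    ring
  rw [hl] at hs
  exact hs

/-- `log` of `Real.GammaSeq`. -/
lemma aux_log_gammaSeq {s : ℝ} (hs : 0 < s) {n : ℕ} (hn : 1 ≤ n) :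
    Real.log (Real.GammaSeq s n) =
      s * Real.log n + Real.log (n !) - ∑ j ∈ Finset.range (n+1), Real.log (s + j) := by
  have hn0 : (0:ℝ) < n := by exact_mod_cast hn
  have hfac : (0:ℝ) < (n ! : ℝ) := by exact_mod_cast n.factorial_pos
  have hprod : (0:ℝ) < ∏ j ∈ Finset.range (n+1), (s + (j:ℝ)) :=
    Finset.prod_pos fun j _ => by positivity
  rw [Real.GammaSeq, Real.log_div (by positivity) (ne_of_gt hprod),
    Real.log_mul (by positivity) (ne_of_gt hfac), Real.log_rpow hn0,
    Real.log_prod (fun j _ => by positivity)]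

/-- `g(x,y) = (y / Γ(1+y)^(1/y)) · (Γ(1+xy)^(1/y) / (yˣ · Γ(1+x)))`. -/
noncomputable def g (x y : ℝ) : ℝ :=
  (y / Real.Gamma (1 + y) ^ (1 / y)) *
    (Real.Gamma (1 + x * y) ^ (1 / y) / (y ^ x * Real.Gamma (1 + x)))

/-- For every fixed `1/2 ≤ x ≤ 1`, `y ↦ g(x,y)` is non-decreasing on `[2, ∞)`. -/
theorem g_monotone_in_y (x y₁ y₂ : ℝ) (hx1 : 1 / 2 ≤ x) (hx2 : x ≤ 1)
    (h₁ : 2 ≤ y₁) (h₁₂ : y₁ ≤ y₂) :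
    g x y₁ ≤ g x y₂ := by
  have hx0 : 0 < x := by linarith
  have hy₁ : 0 < y₁ := by linarith
  have hy₂ : 0 < y₂ := by linarith
  set A : ℝ → ℝ := fun y => (1-x)*Real.log y
    + (Real.log (Real.Gamma (1+x*y)) - Real.log (Real.Gamma (1+y)))/y with hA
  -- key monotonicity of A
  have hAle : A y₁ ≤ A y₂ := by
    set B : ℕ → ℝ → ℝ := fun n y => (1-x)*Real.log y
      + (Real.log (Real.GammaSeq (1+x*y) n) - Real.log (Real.GammaSeq (1+y) n))/y with hB
    have htend : ∀ y : ℝ, 0 < y → Tendsto (fun n => B n y) atTop (𝓝 (A y)) := by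
      intro y hy
      have hg1 : Real.Gamma (1+x*y) ≠ 0 := ne_of_gt (Real.Gamma_pos_of_pos (by positivity))
      have hg2 : Real.Gamma (1+y) ≠ 0 := ne_of_gt (Real.Gamma_pos_of_pos (by positivity))
      have h1 := (Real.GammaSeq_tendsto_Gamma (1+x*y)).log hg1
      have h2 := (Real.GammaSeq_tendsto_Gamma (1+y)).log hg2
      exact tendsto_const_nhds.add ((h1.sub h2).div_const y)
    have hBle : ∀ n : ℕ, 1 ≤ n → B n y₁ ≤ B n y₂ := by
      intro n hn
      have hBeq : ∀ y : ℝ, 0 < y → B n y = (1-x)*Real.log y + (x-1)*Real.log n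
          + ∑ j ∈ Finset.range (n+1),
              (Real.log (y+(j+1)) - Real.log (x*y+(j+1)))/y := by
        intro y hy
        have e₁ : ∑ j ∈ Finset.range (n+1), Real.log (1+x*y+j)
            = ∑ j ∈ Finset.range (n+1), Real.log (x*y+(j+1)) :=
          Finset.sum_congr rfl fun j _ => by rw [show (1:ℝ)+x*y+j = x*y+(j+1) by ring]
        have e₂ : ∑ j ∈ Finset.range (n+1), Real.log (1+y+j)
            = ∑ j ∈ Finset.range (n+1), Real.log (y+(j+1)) :=
          Finset.sum_congr rfl fun j _ => by rw [show (1:ℝ)+y+j = y+(j+1) by ring]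
        have e₃ : ∑ j ∈ Finset.range (n+1),
            (Real.log (y+(j+1)) - Real.log (x*y+(j+1)))/y
          = ((∑ j ∈ Finset.range (n+1), Real.log (y+(j+1)))
              - ∑ j ∈ Finset.range (n+1), Real.log (x*y+(j+1)))/y := by
          rw [← Finset.sum_div, Finset.sum_sub_distrib]
        simp only [hB]
        rw [aux_log_gammaSeq (by positivity) hn, aux_log_gammaSeq (by positivity) hn,
          e₁, e₂, e₃]
        field_simp
        ring
      rw [hBeq y₁ hy₁, hBeq y₂ hy₂]
      have hkey := aux_finite_sum_ineq hx1 hx2 h₁ h₁₂ (n+1)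
      rw [Finset.sum_sub_distrib] at hkey
      linarith
    exact le_of_tendsto_of_tendsto (htend y₁ hy₁) (htend y₂ hy₂)
      (eventually_atTop.mpr ⟨1, hBle⟩)
  -- convert to g
  have hlog : ∀ y : ℝ, 0 < y → Real.log (g x y) = A y - Real.log (Real.Gamma (1+x)) := by
    intro y hy
    have hΓy : 0 < Real.Gamma (1+y) := Real.Gamma_pos_of_pos (by positivity)
    have hΓxy : 0 < Real.Gamma (1+x*y) := Real.Gamma_pos_of_pos (by positivity)
    have hΓx : 0 < Real.Gamma (1+x) := Real.Gamma_pos_of_pos (by positivity)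
    have hP : 0 < Real.Gamma (1+y) ^ (1/y) := Real.rpow_pos_of_pos hΓy _
    have hQ : 0 < Real.Gamma (1+x*y) ^ (1/y) := Real.rpow_pos_of_pos hΓxy _
    have hR : 0 < y ^ x := Real.rpow_pos_of_pos hy _
    unfold g
    rw [Real.log_mul (ne_of_gt (div_pos hy hP)) (ne_of_gt (div_pos hQ (mul_pos hR hΓx))),
      Real.log_div (ne_of_gt hy) (ne_of_gt hP),
      Real.log_div (ne_of_gt hQ) (ne_of_gt (mul_pos hR hΓx)),
      Real.log_mul (ne_of_gt hR) (ne_of_gt hΓx),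
      Real.log_rpow hΓy, Real.log_rpow hΓxy, Real.log_rpow hy]
    simp only [hA]
    field_simp
    ring
  have hgpos : ∀ y : ℝ, 0 < y → 0 < g x y := by
    intro y hy
    have hΓy : 0 < Real.Gamma (1+y) := Real.Gamma_pos_of_pos (by positivity)
    have hΓxy : 0 < Real.Gamma (1+x*y) := Real.Gamma_pos_of_pos (by positivity)
    have hΓx : 0 < Real.Gamma (1+x) := Real.Gamma_pos_of_pos (by positivity)
    unfold g
    have hP : 0 < Real.Gamma (1+y) ^ (1/y) := Real.rpow_pos_of_pos hΓy _
    have hQ : 0 < Real.Gamma (1+x*y) ^ (1/y) := Real.rpow_pos_of_pos hΓxy _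
    have hR : 0 < y ^ x := Real.rpow_pos_of_pos hy _
    positivity
  calc g x y₁ = Real.exp (Real.log (g x y₁)) := (Real.exp_log (hgpos y₁ hy₁)).symm
    _ ≤ Real.exp (Real.log (g x y₂)) := by
        rw [hlog y₁ hy₁, hlog y₂ hy₂]
        exact Real.exp_le_exp.mpr (by linarith)
    _ = g x y₂ := Real.exp_log (hgpos y₂ hy₂)
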